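/- Let k be an algebraically closed field of characteristic 2 and let 𝔤 be a nonzero finite-dimensional Lie algebra over k equipped with a restricted structure given by a map sq : 𝔤 → 𝔤 satisfying sq(c·x) = c²·sq(x), sq(x + y) = sq(x) + sq(y) + [x, y], and [sq(x), y] = [x, [x, y]] for all x, y ∈ 𝔤 and c ∈ k. Then 𝔤 contains a nonzero 2-closed element, i.e. there exists x ≠ 0 in 𝔤 with sq(x) ∈ k·x. -/

import Mathlib

open Polynomial
lemma aux_poly {k : Type*} [Field k] [IsAlgClosed k] [CharP k 2] (n : ℕ) (c : ℕ → k) (hc0 : c 0 ≠ 0) :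
    ∃ (t : k) (a : ℕ → k), t ≠ 0 ∧ a 0 = c 0 * t ^ 2 ∧
      (∀ i, a (i + 1) = a i ^ 2 + c (i + 1) * t ^ 2) ∧ a n = t := by
  classical
  have h2 : (2 : k) = 0 := by exact_mod_cast CharP.cast_eq_zero k 2
  -- define Q
  let Q : ℕ → k[X] := fun i => Nat.rec (C (c 0) * X ^ 2) (fun i q => q ^ 2 + C (c (i + 1)) * X ^ 2) i
  have hQ0 : Q 0 = C (c 0) * X ^ 2 := rfl
  have hQs : ∀ i, Q (i + 1) = Q i ^ 2 + C (c (i + 1)) * X ^ 2 := fun i => rfl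
  have hdeg : ∀ i, (Q i).natDegree = 2 ^ (i + 1) ∧ (Q i).leadingCoeff = c 0 ^ 2 ^ i := by
    intro i
    induction i with
    | zero =>
      constructor
      · rw [hQ0, natDegree_C_mul_X_pow 2 _ hc0]; norm_num
      · rw [hQ0]
        simp [leadingCoeff, natDegree_C_mul_X_pow 2 _ hc0, coeff_C_mul]
    | succ i ih =>
      have hlt : (C (c (i + 1)) * X ^ 2).natDegree < (Q i ^ 2).natDegree := by
        rw [natDegree_pow, ih.1]
        calc (C (c (i + 1)) * X ^ 2).natDegree ≤ 2 := natDegree_C_mul_X_pow_le _ _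
        _ < 2 * 2 ^ (i + 1) := by
            have : (1:ℕ) < 2 ^ (i+1) := Nat.one_lt_two_pow (by omega)
            omega
      constructor
      · rw [hQs, natDegree_add_eq_left_of_natDegree_lt hlt, natDegree_pow, ih.1]
        ring
      · rw [hQs, leadingCoeff, natDegree_add_eq_left_of_natDegree_lt hlt, coeff_add,
          natDegree_pow, ih.1]
        have h1 : (Q i ^ 2).coeff (2 * 2 ^ (i+1)) = (Q i ^ 2).leadingCoeff := by
          rw [leadingCoeff, natDegree_pow, ih.1]
        have h2' : (C (c (i + 1)) * X ^ 2).coeff (2 * 2 ^ (i+1)) = 0 := by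
          apply coeff_eq_zero_of_natDegree_lt
          calc (C (c (i + 1)) * X ^ 2).natDegree ≤ 2 := natDegree_C_mul_X_pow_le _ _
          _ < 2 * 2 ^ (i + 1) := by
              have : (1:ℕ) < 2 ^ (i+1) := Nat.one_lt_two_pow (by omega)
              omega
        rw [h1, h2', leadingCoeff_pow, ih.2, add_zero, ← pow_mul, pow_succ, mul_comm]
  have hder : ∀ i, derivative (Q i) = 0 := by
    intro i
    induction i with
    | zero => rw [hQ0]; simp [derivative_C_mul, h2]; exact Or.inr (by rw [one_add_one_eq_two, ← map_ofNat C 2, h2, map_zero])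
    | succ i ih =>
      rw [hQs, derivative_add, derivative_pow, ih, derivative_C_mul]
      simp [h2]; exact Or.inr (by rw [one_add_one_eq_two, ← map_ofNat C 2, h2, map_zero])
  have heval0 : ∀ i, (Q i).eval 0 = 0 := by
    intro i
    induction i with
    | zero => simp [hQ0]
    | succ i ih => simp [hQs, ih]
  -- R
  set R : k[X] := Q n - X with hR
  have hdegR : R.natDegree = 2 ^ (n + 1) := by
    rw [hR, natDegree_sub_eq_left_of_natDegree_lt (by
      rw [(hdeg n).1, natDegree_X]; exact Nat.one_lt_two_pow (by omega))]
    exact (hdeg n).1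
  have hRne : R ≠ 0 := by
    intro h
    rw [h, natDegree_zero] at hdegR
    have : (0:ℕ) < 2 ^ (n+1) := pow_pos (by norm_num) _
    omega
  have hsep : R.Separable := by
    refine ⟨0, -1, ?_⟩
    rw [hR, derivative_sub, hder n, derivative_X, zero_sub]
    ring
  have hroots_card : R.roots.card = 2 ^ (n + 1) := by
    rw [← hdegR, ← splits_iff_card_roots]
    exact IsAlgClosed.splits R
  have hnodup := hsep.squarefree
  have hnd : R.roots.Nodup := nodup_roots hsep
  have h0root : (0 : k) ∈ R.roots := by
    rw [mem_roots hRne]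
    simp [hR, IsRoot, heval0 n]
  obtain ⟨t, htmem, htne⟩ : ∃ t ∈ R.roots, t ≠ 0 := by
    by_contra h
    push_neg at h
    have hsub : R.roots.toFinset ⊆ {0} := by
      intro a ha
      simp only [Finset.mem_singleton]
      exact h a (Multiset.mem_toFinset.mp ha)
    have := Finset.card_le_card hsub
    rw [Multiset.toFinset_card_of_nodup hnd, hroots_card] at this
    simp at this
  have htroot : (Q n).eval t = t := by
    have := (mem_roots hRne).mp htmem
    rw [IsRoot, hR] at this
    rw [eval_sub, eval_X] at this
    exact sub_eq_zero.mp this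
  refine ⟨t, fun i => (Q i).eval t, htne, ?_, ?_, htroot⟩
  · show eval t (Q 0) = _
    rw [hQ0]; simp
  · intro i
    show eval t (Q (i+1)) = eval t (Q i) ^ 2 + _
    rw [hQs]; simp

theorem exists_two_closed_element_of_restricted_lie_algebra
    {k : Type*} [Field k] [IsAlgClosed k] [CharP k 2]
    {𝔤 : Type*} [LieRing 𝔤] [LieAlgebra k 𝔤] [FiniteDimensional k 𝔤] [Nontrivial 𝔤]
    (sq : 𝔤 → 𝔤)
    (hsq_smul : ∀ (c : k) (x : 𝔤), sq (c • x) = (c ^ 2) • sq x)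
    (hsq_add : ∀ x y : 𝔤, sq (x + y) = sq x + sq y + ⁅x, y⁆)
    (hsq_ad : ∀ x y : 𝔤, ⁅sq x, y⁆ = ⁅x, ⁅x, y⁆⁆) :
    ∃ x : 𝔤, x ≠ 0 ∧ ∃ c : k, sq x = c • x := by
  classical
  obtain ⟨x, hx⟩ := exists_ne (0 : 𝔤)
  set e : ℕ → 𝔤 := fun n => sq^[n] x with he
  have he0 : e 0 = x := rfl
  have hes : ∀ n, e (n + 1) = sq (e n) := fun n => Function.iterate_succ_apply' sq n x
  have h2k : (2 : k) = 0 := by exact_mod_cast CharP.cast_eq_zero k 2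
  have hdouble : ∀ z : 𝔤, z + z = 0 := by
    intro z
    have h := two_smul k z
    rw [h2k, zero_smul] at h
    exact h.symm
  -- brackets of iterates vanish
  have hA : ∀ i, ⁅e i, e 0⁆ = 0 := by
    intro i
    induction i with
    | zero => exact lie_self x
    | succ i ih => rw [hes, hsq_ad, ih, lie_zero]
  have hB : ∀ j i, ⁅e i, e j⁆ = 0 := by
    intro j
    induction j with
    | zero => exact hA
    | succ j ih =>
      intro i
      have h' : ⁅e j, e i⁆ = 0 := by rw [← lie_skew, ih i, neg_zero]
      rw [← lie_skew, hes, hsq_ad, h', lie_zero, neg_zero]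
  have hsq0 : sq 0 = 0 := by
    have h := hsq_smul 0 0
    rw [zero_smul] at h
    simpa using h
  -- bracket of sums with iterates
  have key : ∀ (s : Finset ℕ) (f : ℕ → 𝔤) (w : 𝔤), (∀ i ∈ s, ⁅f i, w⁆ = 0) →
      ⁅∑ i ∈ s, f i, w⁆ = 0 := by
    intro s f w h
    induction s using Finset.cons_induction with
    | empty => simp
    | cons i s hi ih =>
      rw [Finset.sum_cons, add_lie, h i (Finset.mem_cons_self i s),
        ih (fun j hj => h j (Finset.mem_cons_of_mem hj)), add_zero]
  -- sq on linear combinations of iterates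
  have hsq_sum : ∀ (N : ℕ) (a : ℕ → k),
      sq (∑ i ∈ Finset.range N, a i • e i) = ∑ i ∈ Finset.range N, a i ^ 2 • e (i + 1) := by
    intro N a
    induction N with
    | zero => simpa using hsq0
    | succ N ih =>
      rw [Finset.sum_range_succ, hsq_add, ih, hsq_smul, ← hes, Finset.sum_range_succ]
      have hbr : ⁅∑ i ∈ Finset.range N, a i • e i, a N • e N⁆ = 0 := by
        apply key
        intro i _
        rw [smul_lie, lie_smul, hB, smul_zero, smul_zero]
      rw [hbr, add_zero]
  -- minimal linear dependence
  have hexdep : ∃ N, ¬ LinearIndependent k (fun i : Fin N => e i) := by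
    refine ⟨Module.finrank k 𝔤 + 1, fun h => ?_⟩
    have hle := h.fintype_card_le_finrank
    simp at hle
  have hm_spec : ¬ LinearIndependent k (fun i : Fin (Nat.find hexdep) => e i) :=
    Nat.find_spec hexdep
  have h0 : Nat.find hexdep ≠ 0 := by
    intro h
    rw [h] at hm_spec
    exact hm_spec linearIndependent_empty_type
  have h1 : Nat.find hexdep ≠ 1 := by
    intro h
    rw [h] at hm_spec
    apply hm_spec
    apply linearIndependent_unique_iff.mpr
    simpa [he0] using hx
  obtain ⟨n, hn⟩ : ∃ n, Nat.find hexdep = n + 1 := Nat.exists_eq_succ_of_ne_zero h0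
  have hindep : LinearIndependent k (fun i : Fin n => e i) :=
    not_not.mp (Nat.find_min hexdep (by omega))
  have hdep : ¬ LinearIndependent k (fun i : Fin (n + 1) => e i) := hn ▸ hm_spec
  have hnpos : 1 ≤ n := by omega
  -- e n lies in span of previous
  have hsnoc : (fun i : Fin (n + 1) => e i) = Fin.snoc (fun i : Fin n => e i) (e n) := by
    funext i
    refine Fin.lastCases ?_ ?_ i
    · simp [Fin.snoc_last]
    · intro j
      simp [Fin.snoc_castSucc]
  rw [hsnoc, linearIndependent_fin_snoc] at hdep
  push_neg at hdep
  have hmem := hdep hindep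
  rw [Submodule.mem_span_range_iff_exists_fun] at hmem
  obtain ⟨cf, hcf⟩ := hmem
  set c : ℕ → k := fun i => if h : i < n then cf ⟨i, h⟩ else 0 with hc
  have hcsum : ∑ i ∈ Finset.range n, c i • e i = e n := by
    rw [← Fin.sum_univ_eq_sum_range (fun i => c i • e i) n, ← hcf]
    apply Finset.sum_congr rfl
    intro i _
    simp [hc, i.isLt]
  have hcn : c n = 0 := by simp [hc]
  -- independence in sum form
  have hind : ∀ b : ℕ → k, (∑ i ∈ Finset.range n, b i • e i) = 0 → ∀ i, i < n → b i = 0 := by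
    intro b hb i hi
    have h := Fintype.linearIndependent_iff.mp hindep (fun i : Fin n => b i) ?_ ⟨i, hi⟩
    · exact h
    · rw [Fin.sum_univ_eq_sum_range (fun i => b i • e i) n]
      exact hb
  obtain ⟨p, hp⟩ : ∃ p, n = p + 1 := Nat.exists_eq_succ_of_ne_zero (by omega)
  by_cases hc0 : c 0 = 0
  · -- kernel case : find u ≠ 0 with sq u = 0
    have hsqrt : ∀ i : ℕ, ∃ ri : k, ri ^ 2 = c i :=
      fun i => IsAlgClosed.exists_pow_nat_eq (c i) (by norm_num)
    choose r hr using hsqrt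
    set b : ℕ → k := fun j => r (j + 1) + if j = p then 1 else 0 with hbdef
    refine ⟨∑ j ∈ Finset.range n, b j • e j, ?_, 0, ?_⟩
    · intro h
      have hbp := hind b h p (by omega)
      have hrn : r n = 0 := by
        have := hr n
        rw [hcn] at this
        exact pow_eq_zero_iff (by norm_num) |>.mp this
      rw [hbdef] at hbp
      simp only [if_pos rfl] at hbp
      rw [← hp, hrn, zero_add] at hbp
      exact one_ne_zero hbp
    · rw [hsq_sum, zero_smul]
      have hb2 : ∀ j, b j ^ 2 = c (j + 1) + (if j = p then (1:k) else 0) := by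
        intro j
        by_cases h : j = p
        · simp only [hbdef, if_pos h]
          linear_combination hr (j + 1) + r (j + 1) * h2k
        · simp only [hbdef, if_neg h, add_zero]
          exact hr (j + 1)
      calc ∑ j ∈ Finset.range n, b j ^ 2 • e (j + 1)
          = ∑ j ∈ Finset.range n, (c (j + 1) • e (j + 1)
              + (if j = p then (1:k) else 0) • e (j + 1)) := by
            apply Finset.sum_congr rfl
            intro j _
            rw [hb2 j, add_smul]
        _ = (∑ j ∈ Finset.range n, c (j + 1) • e (j + 1))
              + ∑ j ∈ Finset.range n, (if j = p then (1:k) else 0) • e (j + 1) :=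
            Finset.sum_add_distrib
        _ = e n + e n := by
            congr 1
            · have hss := Finset.sum_range_succ' (fun i => c i • e i) n
              rw [Finset.sum_range_succ, hcsum, hcn, zero_smul, add_zero, hc0, zero_smul,
                add_zero] at hss
              exact hss.symm
            · rw [hp]
              have : ∀ j ∈ Finset.range (p + 1), (if j = p then (1:k) else 0) • e (j + 1)
                  = if j = p then e (j + 1) else 0 := by
                intro j _
                split <;> simp
              rw [Finset.sum_congr rfl this, Finset.sum_ite_eq' (Finset.range (p + 1)) p
                (fun j => e (j + 1))]
              simp
        _ = 0 := hdouble (e n)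
  · -- eigenvector case
    obtain ⟨t, a, htne, ha0, has, hap⟩ := aux_poly p c hc0
    refine ⟨∑ i ∈ Finset.range n, a i • e i, ?_, 1, ?_⟩
    · intro h
      have := hind a h p (by omega)
      rw [hap] at this
      exact htne this
    · rw [hsq_sum, one_smul]
      rw [hp, Finset.sum_range_succ (fun i => a i ^ 2 • e (i + 1)) p]
      have hen : a p ^ 2 • e (p + 1)
          = (∑ i ∈ Finset.range p, (t ^ 2 * c (i + 1)) • e (i + 1)) + (t ^ 2 * c 0) • e 0 := by
        rw [← hp, ← hcsum, Finset.smul_sum, hap]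
        have hss := Finset.sum_range_succ' (fun i => (t ^ 2 * c i) • e i) p
        rw [← hp] at hss
        calc ∑ i ∈ Finset.range n, t ^ 2 • (c i • e i)
            = ∑ i ∈ Finset.range n, (t ^ 2 * c i) • e i := by
              apply Finset.sum_congr rfl
              intro i _
              rw [smul_smul]
          _ = _ := hss
      rw [hen, ← add_assoc, ← Finset.sum_add_distrib,
        Finset.sum_range_succ' (fun i => a i • e i) p]
      congr 1
      · apply Finset.sum_congr rfl
        intro i _
        rw [← add_smul, has i]
        congr 1
        ring
      · rw [ha0]
        congr 1
        ring
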